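/- A posteriori pressure error bound for saddle-point problems: under the stated assumptions, if e_v, ê_v ∈ V and e_p, ê_p ∈ Q satisfy the error-residual equations a(e_v,u) − b(u,e_p) = ⟨ê_v,u⟩_V for all u ∈ V and b(e_v,q) = ⟨ê_p,q⟩_Q for all q ∈ Q, then ‖e_p‖_Q ≤ Δ^p, where Δ^v := ‖ê_v‖_V/α + (1 + γ/α)·‖ê_p‖_Q/β and Δ^p := ‖ê_v‖_V/β + (γ/β)·Δ^v. -/

import Mathlib

open scoped RealInnerProductSpace

/-- A posteriori pressure error bound for saddle-point problems. -/
theorem pressure_error_bound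
    {V Q : Type*}
    [NormedAddCommGroup V] [InnerProductSpace ℝ V] [CompleteSpace V]
    [NormedAddCommGroup Q] [InnerProductSpace ℝ Q] [CompleteSpace Q]
    (a : V →ₗ[ℝ] V →ₗ[ℝ] ℝ) (b : V →ₗ[ℝ] Q →ₗ[ℝ] ℝ)
    (γ α γb β : ℝ)
    (ha_bdd : ∀ u v : V, |a u v| ≤ γ * ‖u‖ * ‖v‖)
    (hα : 0 < α)
    (ha_coer : ∀ u : V, α * ‖u‖ ^ 2 ≤ a u u)
    (hb_bdd : ∀ (u : V) (q : Q), |b u q| ≤ γb * ‖u‖ * ‖q‖)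
    (hβ : 0 < β)
    (hb_infsup : ∀ q : Q, β * ‖q‖ ≤ sSup {r : ℝ | ∃ u : V, u ≠ 0 ∧ r = b u q / ‖u‖})
    (ev ehat_v : V) (ep ehat_p : Q)
    (h1 : ∀ u : V, a ev u - b u ep = ⟪ehat_v, u⟫)
    (h2 : ∀ q : Q, b ev q = ⟪ehat_p, q⟫)
    (Δv Δp : ℝ)
    (hΔv : Δv = ‖ehat_v‖ / α + (1 + γ / α) * (‖ehat_p‖ / β))
    (hΔp : Δp = ‖ehat_v‖ / β + (γ / β) * Δv) :
    ‖ep‖ ≤ Δp := by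
  by_cases hγ0 : 0 ≤ γ
  · -- main case
    set A := ‖ehat_v‖ with hA
    set P := ‖ehat_p‖ with hP
    have hAnn : (0:ℝ) ≤ A := norm_nonneg _
    have hPnn : (0:ℝ) ≤ P := norm_nonneg _
    have hxnn : (0:ℝ) ≤ ‖ev‖ := norm_nonneg _
    have hynn : (0:ℝ) ≤ ‖ep‖ := norm_nonneg _
    -- quadratic bound on ‖ev‖
    have hx2 : α * ‖ev‖ ^ 2 ≤ A * ‖ev‖ + P * ‖ep‖ := by
      have e1 := h1 ev
      have e2 := h2 ep
      have i1 := real_inner_le_norm ehat_v ev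
      have i2 := real_inner_le_norm ehat_p ep
      have := ha_coer ev
      linarith
    -- inf-sup bound on ‖ep‖
    have hy : β * ‖ep‖ ≤ γ * ‖ev‖ + A := by
      refine (hb_infsup ep).trans (Real.sSup_le ?_ (by positivity))
      rintro r ⟨u, hu, rfl⟩
      have hun : (0:ℝ) < ‖u‖ := norm_pos_iff.mpr hu
      rw [div_le_iff₀ hun]
      have hb : b u ep = a ev u - ⟪ehat_v, u⟫ := by linarith [h1 u]
      have i1 := (abs_le.mp (ha_bdd ev u)).2
      have i2 := (abs_le.mp (abs_real_inner_le_norm ehat_v u)).1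
      nlinarith [norm_nonneg u]
    -- velocity bound
    have hxD : ‖ev‖ ≤ Δv := by
      rw [hΔv]
      set D := A / α + (1 + γ / α) * (P / β) with hDdef
      by_contra hlt
      push_neg at hlt
      have key : α * β * ‖ev‖ ^ 2 ≤ β * A * ‖ev‖ + γ * P * ‖ev‖ + P * A := by
        nlinarith [mul_le_mul_of_nonneg_left hy hPnn, mul_le_mul_of_nonneg_left hx2 hβ.le]
      have hDeq : α * β * D = β * A + α * P + γ * P := by
        rw [hDdef]; field_simp; ring
      have hDnn : (0:ℝ) ≤ D := by rw [hDdef]; positivity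
      have hxpos : (0:ℝ) < ‖ev‖ := lt_of_le_of_lt hDnn hlt
      have hAx : A ≤ α * D := by nlinarith [mul_nonneg (by linarith : (0:ℝ) ≤ α + γ) hPnn]
      have hPαx : (0:ℝ) ≤ P * (α * ‖ev‖ - A) := by
        apply mul_nonneg hPnn
        nlinarith
      have hDeqx : α * β * D * ‖ev‖ = (β * A + α * P + γ * P) * ‖ev‖ := by
        rw [hDeq]
      have hprod : (0:ℝ) < α * β * (‖ev‖ * (‖ev‖ - D)) :=
        mul_pos (mul_pos hα hβ) (mul_pos hxpos (sub_pos.mpr hlt))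
      nlinarith [key, hDeqx, hPαx, hprod]
    -- conclude
    rw [hΔp]
    rw [← mul_le_mul_iff_right₀ hβ]
    have hγx : γ * ‖ev‖ ≤ γ * Δv := mul_le_mul_of_nonneg_left hxD hγ0
    have : β * (A / β + γ / β * Δv) = A + γ * Δv := by field_simp
    rw [this]
    linarith
  · -- degenerate case: γ < 0 forces V trivial
    push_neg at hγ0
    have hV : ∀ u : V, u = 0 := by
      intro u
      by_contra hu
      have hun : (0:ℝ) < ‖u‖ := norm_pos_iff.mpr hu
      have h1' := ha_coer u
      have h2' := (abs_le.mp (ha_bdd u u)).2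
      nlinarith [mul_pos hun hun, pow_pos hun 2]
    have hev : ev = 0 := hV ev
    have hehv : ehat_v = 0 := hV ehat_v
    have hempty : ∀ q : Q, sSup {r : ℝ | ∃ u : V, u ≠ 0 ∧ r = b u q / ‖u‖} = 0 := by
      intro q
      have : {r : ℝ | ∃ u : V, u ≠ 0 ∧ r = b u q / ‖u‖} = ∅ := by
        ext r; simp only [Set.mem_setOf_eq, Set.mem_empty_iff_false, iff_false]
        rintro ⟨u, hu, -⟩; exact hu (hV u)
      rw [this, Real.sSup_empty]
    have key : ∀ q : Q, ‖q‖ = 0 := by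
      intro q
      have h := hb_infsup q
      rw [hempty] at h
      have hmul : β * ‖q‖ = 0 := le_antisymm h (mul_nonneg hβ.le (norm_nonneg q))
      rcases mul_eq_zero.mp hmul with h' | h'
      · exact absurd h' hβ.ne'
      · exact h'
    have hP : ‖ehat_p‖ = 0 := key ehat_p
    have hy : ‖ep‖ = 0 := key ep
    have hA : ‖ehat_v‖ = 0 := by rw [hehv, norm_zero]
    rw [hy, hΔp, hΔv, hA, hP]
    simp
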